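/- Let $P = (p_n)$ and $Q = (q_n)$ be sequences of integers with $p_n, q_n \geq 3$, $q_n \geq p_n$ for all $n$, $q_n \to \infty$, $\lim_{n\to\infty} \frac{\log q_{n+j+1}}{\log(q_1\cdots q_n)} = 0$ for all $j \geq 0$, and $\sum_{n=1}^{\infty} \frac{q_n - p_n}{q_n} < \infty$. Then for every $\alpha \in (0,1)$ and every $k \geq 0$: $\limsup_{n\to\infty} \frac{(q_1\cdots q_n)^{\alpha}}{p_1 \cdots p_n} \cdot \left( \frac{q_{n+1} \cdots q_{n+k+1}}{\max(1, q_{n+1} - p_{n+1})} \right)^{\alpha} = 0$. -/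

import Mathlib

open Filter

theorem stmt17 (p q : ℕ → ℕ) (hp : ∀ n, 3 ≤ p n) (hq3 : ∀ n, 3 ≤ q n)
    (hpq : ∀ n, p n ≤ q n) (hqinf : Tendsto q atTop atTop)
    (hlog : ∀ j : ℕ, Tendsto
      (fun n => Real.log (q (n + j)) / Real.log (∏ i ∈ Finset.range n, (q i : ℝ)))
      atTop (nhds 0))
    (hsum : Summable fun n => ((q n : ℝ) - p n) / q n) :
    ∀ α : ℝ, α ∈ Set.Ioo (0 : ℝ) 1 → ∀ k : ℕ,
      Tendsto (fun n =>
          (∏ i ∈ Finset.range n, (q i : ℝ)) ^ α / (∏ i ∈ Finset.range n, (p i : ℝ)) *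
            ((∏ i ∈ Finset.Ico n (n + k + 1), (q i : ℝ)) / max 1 ((q n : ℝ) - p n)) ^ α)
        atTop (nhds 0) := by
  intro α hα k
  obtain ⟨hα0, hα1⟩ := hα
  have hq0 : ∀ n, (0:ℝ) < q n := fun n => by
    have := hq3 n; exact_mod_cast lt_of_lt_of_le (by norm_num) this
  have hp0 : ∀ n, (0:ℝ) < p n := fun n => by
    have := hp n; exact_mod_cast lt_of_lt_of_le (by norm_num) this
  have hpq' : ∀ n, (p n : ℝ) ≤ q n := fun n => by exact_mod_cast hpq n
  set Q : ℕ → ℝ := fun n => ∏ i ∈ Finset.range n, (q i : ℝ) with hQdef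
  set P : ℕ → ℝ := fun n => ∏ i ∈ Finset.range n, (p i : ℝ) with hPdef
  set R : ℕ → ℝ := fun n => ∏ i ∈ Finset.Ico n (n + k + 1), (q i : ℝ) with hRdef
  set M : ℕ → ℝ := fun n => max 1 ((q n : ℝ) - p n) with hMdef
  have hQpos : ∀ n, 0 < Q n := fun n => Finset.prod_pos fun i _ => hq0 i
  have hPpos : ∀ n, 0 < P n := fun n => Finset.prod_pos fun i _ => hp0 i
  have hRpos : ∀ n, 0 < R n := fun n => Finset.prod_pos fun i _ => hq0 i
  have hM1 : ∀ n, (1:ℝ) ≤ M n := fun n => le_max_left _ _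
  set f : ℕ → ℝ := fun n => Q n ^ α / P n * (R n / M n) ^ α with hfdef
  have hfpos : ∀ n, 0 < f n := by
    intro n
    have h1 : (0:ℝ) < Q n ^ α := Real.rpow_pos_of_pos (hQpos n) α
    have h2 : (0:ℝ) < R n / M n := div_pos (hRpos n) (lt_of_lt_of_le one_pos (hM1 n))
    exact mul_pos (div_pos h1 (hPpos n)) (Real.rpow_pos_of_pos h2 α)
  -- log of Q as a sum
  have hlogQ : ∀ n, Real.log (Q n) = ∑ i ∈ Finset.range n, Real.log (q i) := by
    intro n
    exact Real.log_prod (fun i _ => (hq0 i).ne')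
  have hlogP : ∀ n, Real.log (P n) = ∑ i ∈ Finset.range n, Real.log (p i) := by
    intro n
    exact Real.log_prod (fun i _ => (hp0 i).ne')
  -- Step C : log Q n → ∞
  have hlog3 : (0:ℝ) < Real.log 3 := Real.log_pos (by norm_num)
  have hQlb : ∀ n : ℕ, (n : ℝ) * Real.log 3 ≤ Real.log (Q n) := by
    intro n
    rw [hlogQ]
    calc (n : ℝ) * Real.log 3 = ∑ _i ∈ Finset.range n, Real.log 3 := by
          rw [Finset.sum_const, Finset.card_range, nsmul_eq_mul]
      _ ≤ ∑ i ∈ Finset.range n, Real.log (q i) := by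
          refine Finset.sum_le_sum fun i _ => ?_
          exact Real.log_le_log (by norm_num) (by exact_mod_cast hq3 i)
  have hQtop : Tendsto (fun n => Real.log (Q n)) atTop atTop := by
    refine tendsto_atTop_mono hQlb ?_
    exact Tendsto.atTop_mul_const hlog3 tendsto_natCast_atTop_atTop
  -- Step B : log R n / log Q n → 0
  have hRsum : ∀ n, Real.log (R n) = ∑ j ∈ Finset.range (k + 1), Real.log (q (n + j)) := by
    intro n
    rw [hRdef]
    rw [Real.log_prod (fun i _ => (hq0 i).ne')]
    rw [Finset.sum_Ico_eq_sum_range]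
    have h : n + k + 1 - n = k + 1 := by omega
    rw [h]
  have hu : Tendsto (fun n => Real.log (R n) / Real.log (Q n)) atTop (nhds 0) := by
    have h : Tendsto (fun n => ∑ j ∈ Finset.range (k + 1),
        Real.log (q (n + j)) / Real.log (Q n)) atTop (nhds 0) := by
      have := tendsto_finset_sum (Finset.range (k + 1)) (fun j _ => hlog j)
      simpa using this
    refine h.congr fun n => ?_
    rw [hRsum, Finset.sum_div]
  -- Step A : log Q n - log P n bounded
  set d : ℕ → ℝ := fun n => ((q n : ℝ) - p n) / q n with hddef
  set g : ℕ → ℝ := fun n => Real.log (q n) - Real.log (p n) with hgdef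
  have hg0 : ∀ n, 0 ≤ g n := fun n => by
    have := Real.log_le_log (hp0 n) (hpq' n)
    simp [hgdef]; linarith
  have hd0 : ∀ n, 0 ≤ d n := fun n => by
    apply div_nonneg _ (hq0 n).le
    linarith [hpq' n]
  have hdlim : Tendsto d atTop (nhds 0) := hsum.tendsto_atTop_zero
  have hev : ∀ᶠ n in atTop, d n < 1/2 := hdlim.eventually (gt_mem_nhds (by norm_num))
  have hgd : ∀ᶠ n in atTop, g n ≤ 2 * d n := by
    filter_upwards [hev] with n hn
    have hq2p : (q n : ℝ) ≤ 2 * p n := by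
      rw [hddef] at hn
      have := (div_lt_iff₀ (hq0 n)).mp hn
      linarith
    have h1 : g n ≤ (q n : ℝ) / p n - 1 := by
      have h2 : g n = Real.log ((q n : ℝ) / p n) := by
        rw [hgdef, Real.log_div (hq0 n).ne' (hp0 n).ne']
      rw [h2]
      exact Real.log_le_sub_one_of_pos (div_pos (hq0 n) (hp0 n))
    have h3 : (q n : ℝ) / p n - 1 ≤ 2 * d n := by
      rw [hddef]
      rw [div_sub_one (hp0 n).ne', div_le_iff₀ (hp0 n), mul_comm (2:ℝ), mul_assoc,
        div_mul_eq_mul_div, le_div_iff₀ (hq0 n)]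
      nlinarith [hpq' n, hq0 n, hp0 n]
    exact h1.trans h3
  have hgsum : Summable g := by
    refine summable_of_isBigO_nat (hsum.mul_left 2) ?_
    refine Asymptotics.IsBigO.of_bound 1 ?_
    filter_upwards [hgd] with n hn
    rw [Real.norm_of_nonneg (hg0 n), Real.norm_of_nonneg (mul_nonneg (by norm_num) (hd0 n))]
    simpa using hn
  set B : ℝ := ∑' n, g n with hBdef
  have hQPle : ∀ n, Real.log (Q n) - Real.log (P n) ≤ B := by
    intro n
    rw [hlogQ, hlogP, ← Finset.sum_sub_distrib]
    exact Summable.sum_le_tsum _ (fun i _ => hg0 i) hgsum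
  -- the dominating sequence tends to -∞
  have hdom : Tendsto (fun n => Real.log (Q n) *
      ((α - 1) + α * (Real.log (R n) / Real.log (Q n))) + B) atTop atBot := by
    apply Filter.tendsto_atBot_add_const_right
    apply Tendsto.atTop_mul_neg (show α - 1 + α * 0 < 0 by linarith) hQtop
    have : Tendsto (fun n => (α - 1) + α * (Real.log (R n) / Real.log (Q n)))
        atTop (nhds ((α - 1) + α * 0)) := tendsto_const_nhds.add (tendsto_const_nhds.mul hu)
    simpa using this
  -- log f → -∞
  have hlogf : Tendsto (fun n => Real.log (f n)) atTop atBot := by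
    apply tendsto_atBot_mono' _ _ hdom
    filter_upwards [eventually_ge_atTop 1] with n hn
    have hQ1 : (0:ℝ) < Real.log (Q n) := by
      have := hQlb n
      have : (1:ℝ) * Real.log 3 ≤ Real.log (Q n) := by
        refine le_trans ?_ this
        have : (1:ℝ) ≤ n := by exact_mod_cast hn
        nlinarith
      linarith
    have hMlog : 0 ≤ Real.log (M n) := Real.log_nonneg (hM1 n)
    have hRM : (0:ℝ) < R n / M n := div_pos (hRpos n) (lt_of_lt_of_le one_pos (hM1 n))
    have hexp : Real.log (f n) = α * Real.log (Q n) - Real.log (P n)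
        + α * (Real.log (R n) - Real.log (M n)) := by
      show Real.log (Q n ^ α / P n * (R n / M n) ^ α) = _
      rw [Real.log_mul (div_pos (Real.rpow_pos_of_pos (hQpos n) α) (hPpos n)).ne'
          (Real.rpow_pos_of_pos hRM α).ne',
        Real.log_div (Real.rpow_pos_of_pos (hQpos n) α).ne' (hPpos n).ne',
        Real.log_rpow (hQpos n), Real.log_rpow hRM,
        Real.log_div (hRpos n).ne' (lt_of_lt_of_le one_pos (hM1 n)).ne']
    rw [hexp]
    have hkey : Real.log (Q n) * ((α - 1) + α * (Real.log (R n) / Real.log (Q n)))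
        = (α - 1) * Real.log (Q n) + α * Real.log (R n) := by
      field_simp
    rw [hkey]
    have h1 : -Real.log (P n) ≤ -Real.log (Q n) + B := by linarith [hQPle n]
    nlinarith [hQPle n, mul_nonneg hα0.le hMlog]
  -- conclude
  have : Tendsto (fun n => Real.exp (Real.log (f n))) atTop (nhds 0) :=
    Real.tendsto_exp_atBot.comp hlogf
  refine Tendsto.congr (fun n => ?_) this
  exact Real.exp_log (hfpos n)
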